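/- For positive semidefinite matrices A and B with B positive definite, define the matrix quotient A/B := ∫₀^∞ (λ+B)⁻¹ A (λ+B)⁻¹ dλ. Then A/(A+B) ≤ A/B in the Löwner order (assuming A is also positive definite so both quotients are defined). -/

import Mathlib

open MeasureTheory Matrix Set ComplexOrder

variable {m : Type*} [Fintype m] [DecidableEq m]

/-- The integral matrix quotient `A/B := ∫₀^∞ (λ+B)⁻¹ A (λ+B)⁻¹ dλ`, defined entrywise. -/
noncomputable def mq (A B : Matrix m m ℂ) : Matrix m m ℂ :=
  Matrix.of fun i j =>
    ∫ l in Set.Ioi (0:ℝ),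
      ((l • (1 : Matrix m m ℂ) + B)⁻¹ * A * (l • (1 : Matrix m m ℂ) + B)⁻¹) i j

/-- Real power of a Hermitian matrix via the spectral decomposition (junk value `0` otherwise). -/
noncomputable def mrpow (A : Matrix m m ℂ) (r : ℝ) : Matrix m m ℂ :=
  if h : A.IsHermitian then
    (h.eigenvectorUnitary : Matrix m m ℂ) *
      Matrix.diagonal (fun i => ((h.eigenvalues i ^ r : ℝ) : ℂ)) *
      star (h.eigenvectorUnitary : Matrix m m ℂ)
  else 0

/-- Trace norm of a Hermitian matrix: the sum of the absolute values of its eigenvalues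
(junk value `0` otherwise). -/
noncomputable def traceNorm (A : Matrix m m ℂ) : ℝ :=
  if h : A.IsHermitian then ∑ i, |h.eigenvalues i| else 0

/-- Operator norm of a positive semidefinite (in particular Hermitian) matrix:
its largest eigenvalue (junk value `0` otherwise). -/
noncomputable def opNorm (A : Matrix m m ℂ) : ℝ :=
  if h : A.IsHermitian then ⨆ i, h.eigenvalues i else 0

/-- `Q₂^ι(A‖B) = tr[A (A/B)] = ∫₀^∞ tr[A (t+B)⁻¹ A (t+B)⁻¹] dt`. -/
noncomputable def Q2iota (A B : Matrix m m ℂ) : ℝ :=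
  ∫ t in Set.Ioi (0:ℝ),
    (A * (t • (1 : Matrix m m ℂ) + B)⁻¹ * A * (t • (1 : Matrix m m ℂ) + B)⁻¹).trace.re

/-- A projective measurement: a finite family of mutually orthogonal projections
summing to the identity. -/
structure PVM (m : Type*) [Fintype m] [DecidableEq m] where
  k : ℕ
  P : Fin k → Matrix m m ℂ
  herm : ∀ j, (P j).IsHermitian
  idem : ∀ j, P j * P j = P j
  orth : ∀ j j', j ≠ j' → P j * P j' = 0
  sum_eq : ∑ j, P j = 1

/-- The value `∑_j (tr[ρΛ_j])^α (tr[σΛ_j])^{1-α}` of a projective measurement. -/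
noncomputable def measVal (α : ℝ) (ρ σ : Matrix m m ℂ) (Λ : PVM m) : ℝ :=
  ∑ j, ((ρ * Λ.P j).trace.re) ^ α * ((σ * Λ.P j).trace.re) ^ (1 - α)

/-- The measured Rényi quantity `Q̌_α(ρ‖σ)`: for `α ∈ [1/2,1)` it is the infimum over
projective measurements of `∑_j (tr[ρΛ_j])^α (tr[σΛ_j])^{1-α}`. -/
noncomputable def Qmeas (α : ℝ) (ρ σ : Matrix m m ℂ) : ℝ :=
  sInf {v | ∃ Λ : PVM m, v = measVal α ρ σ Λ}

/-- The measured Rényi divergence `Ď_α(ρ‖σ) = (α-1)⁻¹ log Q̌_α(ρ‖σ)`. -/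
noncomputable def Dmeas (α : ℝ) (ρ σ : Matrix m m ℂ) : ℝ :=
  (1 / (α - 1)) * Real.log (Qmeas α ρ σ)

/-- The classical-quantum state `∑_x P(x) |x⟩⟨x| ⊗ ρ_x` as a matrix on `X × m`. -/
noncomputable def cqState {X : Type*} [Fintype X] [DecidableEq X]
    (P : X → ℝ) (ρ : X → Matrix m m ℂ) : Matrix (X × m) (X × m) ℂ :=
  Matrix.of fun p q => if p.1 = q.1 then (P p.1 : ℂ) * ρ p.1 p.2 q.2 else 0
lemma scalar_int {a b : ℝ} (ha : 0 < a) (hb : 0 < b) :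
    IntegrableOn (fun l : ℝ => (l + a)⁻¹ * (l + b)⁻¹) (Ioi 0) := by
  have hIoi : Ioc (0:ℝ) 1 ∪ Ioi 1 = Ioi 0 := Ioc_union_Ioi_eq_Ioi zero_le_one
  rw [← hIoi]
  apply IntegrableOn.union
  · have hc : ContinuousOn (fun l : ℝ => (l + a)⁻¹ * (l + b)⁻¹) (Icc 0 1) := by
      apply ContinuousOn.mul
      · exact ((continuousOn_id.add continuousOn_const).inv₀ (fun x hx => by
          have := hx.1; show x + a ≠ 0; positivity))
      · exact ((continuousOn_id.add continuousOn_const).inv₀ (fun x hx => by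
          have := hx.1; show x + b ≠ 0; positivity))
    exact (hc.integrableOn_Icc).mono_set Ioc_subset_Icc_self
  · have hbase : IntegrableOn (fun x : ℝ => x ^ (-2 : ℝ)) (Ioi 1) :=
      integrableOn_Ioi_rpow_of_lt (by norm_num) one_pos
    apply hbase.mono'
    · apply ContinuousOn.aestronglyMeasurable _ measurableSet_Ioi
      apply ContinuousOn.mul
      · exact ((continuousOn_id.add continuousOn_const).inv₀ (fun x hx => by
          have : (1:ℝ) < x := hx; show x + a ≠ 0; positivity))
      · exact ((continuousOn_id.add continuousOn_const).inv₀ (fun x hx => by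
          have : (1:ℝ) < x := hx; show x + b ≠ 0; positivity))
    · rw [ae_restrict_iff' measurableSet_Ioi]
      filter_upwards with x hx
      have hx1 : (1:ℝ) < x := hx
      have hx0 : (0:ℝ) < x := lt_trans one_pos hx1
      have h1 : (x + a)⁻¹ ≤ x⁻¹ := by apply inv_anti₀ hx0; linarith
      have h2 : (x + b)⁻¹ ≤ x⁻¹ := by apply inv_anti₀ hx0; linarith
      have hpow : x ^ (-2:ℝ) = x⁻¹ * x⁻¹ := by
        rw [show (-2:ℝ) = -(2:ℕ) by norm_num, Real.rpow_neg hx0.le, Real.rpow_natCast]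
        ring
      rw [hpow, Real.norm_eq_abs, abs_of_nonneg (by positivity)]
      exact mul_le_mul h1 h2 (by positivity) (by positivity)

lemma ptwise (A K : Matrix m m ℂ) (hA : A.PosDef) (hK : K.PosDef) :
    (K⁻¹ * A * K⁻¹ - (K + A)⁻¹ * A * (K + A)⁻¹).PosSemidef := by
  set L := K + A with hLdef
  have hL : L.PosDef := hK.add hA
  set C := K⁻¹ with hC
  set D := L⁻¹ with hD
  have hKdet : IsUnit K.det := hK.det_pos.ne'.isUnit
  have hLdet : IsUnit L.det := hL.det_pos.ne'.isUnit
  have hKC : K * C = 1 := mul_nonsing_inv K hKdet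
  have hCK : C * K = 1 := nonsing_inv_mul K hKdet
  have hLD : L * D = 1 := mul_nonsing_inv L hLdet
  have hDL : D * L = 1 := nonsing_inv_mul L hLdet
  have hCherm : C.IsHermitian := hK.isHermitian.inv
  have hDherm : D.IsHermitian := hL.isHermitian.inv
  have hAherm : A.IsHermitian := hA.isHermitian
  have hA' : A = L - K := (add_sub_cancel_left K A).symm
  have hCAD : C * A * D = C - D := by
    rw [hA', mul_sub, sub_mul, Matrix.mul_assoc C L D, hLD, mul_one, hCK, Matrix.one_mul]
  have hDAC : D * A * C = C - D := by
    have h1 : D * (L - K) * C = D * L * C - D * K * C := by noncomm_ring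
    rw [hA', h1, hDL, Matrix.one_mul, Matrix.mul_assoc D K C, hKC, mul_one]
  have hcomm : C * A * D = D * A * C := by rw [hCAD, hDAC]
  have key : C * A * C - D * A * D
      = ((C - D) * A * D + (C - D) * A * D) + (C - D) * A * (C - D) := by
    have expand : ((C - D) * A * D + (C - D) * A * D) + (C - D) * A * (C - D)
        = C * A * C - D * A * D + (C * A * D - D * A * C) := by noncomm_ring
    rw [expand, hcomm, sub_self, add_zero]
  rw [key]
  have h1 : ((C - D) * A * D).PosSemidef := by
    rw [← hDAC]
    have e : D * A * C * A * D = (A * D)ᴴ * C * (A * D) := by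
      rw [conjTranspose_mul, hAherm.eq, hDherm.eq]; noncomm_ring
    rw [e]
    exact hK.posSemidef.inv.conjTranspose_mul_mul_same (A * D)
  have h2 : ((C - D) * A * (C - D)).PosSemidef := by
    have hsub : (C - D).IsHermitian := hCherm.sub hDherm
    have e : (C - D) * A * (C - D) = (C - D)ᴴ * A * (C - D) := by rw [hsub.eq]
    rw [e]
    exact hA.posSemidef.conjTranspose_mul_mul_same (C - D)
  exact (h1.add h1).add h2

lemma smul_one_eq_diagonal' (l : ℝ) :
    l • (1 : Matrix m m ℂ) = Matrix.diagonal (fun _ => (l : ℂ)) := by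
  ext i j
  by_cases h : i = j <;>
    simp [h, Matrix.one_apply, Matrix.diagonal_apply, Complex.real_smul]

lemma posDef_shift (B : Matrix m m ℂ) (hB : B.PosDef) {l : ℝ} (hl : 0 < l) :
    (l • (1 : Matrix m m ℂ) + B).PosDef := by
  have h1 : (l • (1 : Matrix m m ℂ)).PosSemidef := by
    rw [smul_one_eq_diagonal']
    exact posSemidef_diagonal_iff.mpr fun i => by
      exact_mod_cast Complex.zero_le_real.mpr hl.le
  exact Matrix.PosDef.posSemidef_add h1 hB

lemma shift_inv_formula (B : Matrix m m ℂ) (hB : B.PosDef) {l : ℝ} (hl : 0 < l) :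
    (l • (1 : Matrix m m ℂ) + B)⁻¹ =
      (hB.1.eigenvectorUnitary : Matrix m m ℂ) *
        diagonal (fun k => (((l + hB.1.eigenvalues k)⁻¹ : ℝ) : ℂ)) *
        star (hB.1.eigenvectorUnitary : Matrix m m ℂ) := by
  set U : Matrix m m ℂ := (hB.1.eigenvectorUnitary : Matrix m m ℂ) with hU
  set d := hB.1.eigenvalues with hd
  have hUU : U * star U = 1 := (Matrix.mem_unitaryGroup_iff).mp hB.1.eigenvectorUnitary.2
  have hU'U : star U * U = 1 := (Matrix.mem_unitaryGroup_iff').mp hB.1.eigenvectorUnitary.2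
  have hpos : ∀ k, (0:ℝ) < l + d k := fun k => by
    have := hB.eigenvalues_pos k; linarith
  have hsum : l • (1 : Matrix m m ℂ) + B
      = U * diagonal (fun k => ((l + d k : ℝ) : ℂ)) * star U := by
    conv_lhs => rw [hB.1.spectral_theorem, Unitary.conjStarAlgAut_apply]
    have h1 : l • (1 : Matrix m m ℂ) = U * Matrix.diagonal (fun _ => (l:ℂ)) * star U := by
      rw [← smul_one_eq_diagonal']
      rw [Matrix.mul_smul, Matrix.mul_one, Matrix.smul_mul, hUU, smul_one_eq_diagonal',
        ← smul_one_eq_diagonal']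
    rw [h1, ← Matrix.add_mul, ← Matrix.mul_add, diagonal_add]
    congr 1
    congr 1
    congr 1
    ext k
    push_cast
    rfl
  apply inv_eq_right_inv
  rw [hsum]
  simp only [Matrix.mul_assoc]
  rw [← Matrix.mul_assoc (star U) U _, hU'U, Matrix.one_mul]
  rw [← Matrix.mul_assoc (diagonal fun k => ((l + d k : ℝ) : ℂ))
      (diagonal fun k => (((l + d k)⁻¹ : ℝ) : ℂ)) (star U), diagonal_mul_diagonal]
  have h2 : (fun k => ((l + d k : ℝ) : ℂ) * (((l + d k)⁻¹ : ℝ) : ℂ)) = fun _ => (1:ℂ) := by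
    funext k
    rw [← Complex.ofReal_mul, mul_inv_cancel₀ (hpos k).ne']
    norm_num
  rw [h2, diagonal_one, Matrix.one_mul]
  exact hUU

lemma entry_integrable (A B : Matrix m m ℂ) (hB : B.PosDef) (i j : m) :
    IntegrableOn (fun l : ℝ =>
      ((l • (1 : Matrix m m ℂ) + B)⁻¹ * A * (l • (1 : Matrix m m ℂ) + B)⁻¹) i j)
      (Ioi 0) := by
  set U : Matrix m m ℂ := (hB.1.eigenvectorUnitary : Matrix m m ℂ) with hU
  set d := hB.1.eigenvalues with hd
  set M : Matrix m m ℂ := star U * A * U with hM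
  have hdpos : ∀ k, 0 < d k := fun k => hB.eigenvalues_pos k
  set e : ℝ → m → ℂ := fun l k => (((l + d k)⁻¹ : ℝ) : ℂ) with he
  have key : EqOn
      (fun l : ℝ => ∑ k', (∑ k, U i k * (e l k * M k k' * e l k')) * star U k' j)
      (fun l : ℝ =>
        ((l • (1 : Matrix m m ℂ) + B)⁻¹ * A * (l • (1 : Matrix m m ℂ) + B)⁻¹) i j)
      (Ioi 0) := by
    intro l hl
    have hl' : (0:ℝ) < l := hl
    simp only
    rw [shift_inv_formula B hB hl']
    have hmat : (U * diagonal (e l) * star U) * A * (U * diagonal (e l) * star U)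
        = U * (diagonal (e l) * M * diagonal (e l)) * star U := by
      rw [hM]; simp only [Matrix.mul_assoc]
    rw [hmat, Matrix.mul_apply]
    refine Finset.sum_congr rfl fun k' _ => ?_
    rw [Matrix.mul_apply]
    congr 1
    refine Finset.sum_congr rfl fun k _ => ?_
    simp only [Matrix.mul_diagonal, Matrix.diagonal_mul]
  refine IntegrableOn.congr_fun ?_ key measurableSet_Ioi
  apply integrable_finset_sum
  intro k' _
  apply Integrable.mul_const
  apply integrable_finset_sum
  intro k _
  have heq : (fun l : ℝ => U i k * (e l k * M k k' * e l k'))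
      = fun l : ℝ => (U i k * M k k') * ((((l + d k)⁻¹ * (l + d k')⁻¹ : ℝ)) : ℂ) := by
    funext l
    simp only [he]
    push_cast
    ring
  rw [heq]
  exact ((scalar_int (hdpos k) (hdpos k')).ofReal).const_mul _

noncomputable def Fm (A B : Matrix m m ℂ) (l : ℝ) : Matrix m m ℂ :=
  (l • (1 : Matrix m m ℂ) + B)⁻¹ * A * (l • (1 : Matrix m m ℂ) + B)⁻¹

/-- For positive definite `A` and `B`, `A/(A+B) ≤ A/B` in the Löwner order. -/
theorem quotient_le (A B : Matrix m m ℂ) (hA : A.PosDef) (hB : B.PosDef) :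
    (mq A B - mq A (A + B)).PosSemidef := by
  have hAB : (A + B).PosDef := hA.add hB
  have hFint : ∀ i j, IntegrableOn (fun l => Fm A B l i j) (Ioi 0) :=
    fun i j => entry_integrable A B hB i j
  have hGint : ∀ i j, IntegrableOn (fun l => Fm A (A + B) l i j) (Ioi 0) :=
    fun i j => entry_integrable A (A + B) hAB i j
  have hdiff : ∀ l ∈ Ioi (0:ℝ), (Fm A B l - Fm A (A + B) l).PosSemidef := by
    intro l hl
    have hK := posDef_shift B hB hl
    have h := ptwise A (l • (1 : Matrix m m ℂ) + B) hA hK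
    have e : l • (1 : Matrix m m ℂ) + B + A = l • (1 : Matrix m m ℂ) + (A + B) := by
      rw [add_assoc, add_comm B A]
    rw [e] at h
    exact h
  have hherm : ∀ (C : Matrix m m ℂ), C.PosDef → ∀ l ∈ Ioi (0:ℝ), (Fm A C l).IsHermitian := by
    intro C hC l hl
    have hCi : ((l • (1 : Matrix m m ℂ) + C)⁻¹).IsHermitian :=
      (posDef_shift C hC hl).isHermitian.inv
    show (Fm A C l)ᴴ = Fm A C l
    simp only [Fm, conjTranspose_mul, hCi.eq, hA.isHermitian.eq, Matrix.mul_assoc]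
  have hentry : ∀ i j, (mq A B - mq A (A + B)) i j
      = ∫ l in Ioi (0:ℝ), (Fm A B l i j - Fm A (A + B) l i j) := by
    intro i j
    show (∫ l in Ioi (0:ℝ), Fm A B l i j) - (∫ l in Ioi (0:ℝ), Fm A (A + B) l i j) = _
    exact (integral_sub (hFint i j) (hGint i j)).symm
  refine posSemidef_iff_dotProduct_mulVec.mpr ⟨?_, ?_⟩
  · -- Hermitian
    show (mq A B - mq A (A + B))ᴴ = _
    apply Matrix.ext
    intro i j
    rw [conjTranspose_apply, hentry j i, hentry i j, RCLike.star_def, ← integral_conj]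
    apply setIntegral_congr_fun measurableSet_Ioi
    intro l hl
    have h1 := (hherm B hB l hl).eq
    have h2 := (hherm (A + B) hAB l hl).eq
    simp only [map_sub]
    have e1 : (starRingEnd ℂ) (Fm A B l j i) = Fm A B l i j := by
      conv_rhs => rw [← h1]
      simp [conjTranspose_apply]
    have e2 : (starRingEnd ℂ) (Fm A (A + B) l j i) = Fm A (A + B) l i j := by
      conv_rhs => rw [← h2]
      simp [conjTranspose_apply]
    rw [e1, e2]
  · -- quadratic form
    intro x
    have hq : ∀ (N : Matrix m m ℂ), star x ⬝ᵥ (N *ᵥ x)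
        = ∑ i, ∑ j, (star x i * x j) * N i j := by
      intro N
      simp only [dotProduct, mulVec, Finset.mul_sum]
      exact Finset.sum_congr rfl fun i _ => Finset.sum_congr rfl fun j _ => by ring
    rw [hq]
    have hterm : ∀ i j, (star x i * x j) * ((mq A B - mq A (A + B)) i j)
        = ∫ l in Ioi (0:ℝ), (star x i * x j) * (Fm A B l i j - Fm A (A + B) l i j) := by
      intro i j
      rw [hentry i j, integral_const_mul]
    simp_rw [hterm]
    have hintg : ∀ i j, IntegrableOn
        (fun l => (star x i * x j) * (Fm A B l i j - Fm A (A + B) l i j)) (Ioi 0) :=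
      fun i j => (((hFint i j).sub (hGint i j)).const_mul _)
    have swap : (∫ l in Ioi (0:ℝ),
          ∑ i, ∑ j, (star x i * x j) * (Fm A B l i j - Fm A (A + B) l i j))
        = ∑ i, ∑ j, ∫ l in Ioi (0:ℝ),
            (star x i * x j) * (Fm A B l i j - Fm A (A + B) l i j) := by
      rw [integral_finset_sum _ (fun i _ => integrable_finset_sum _ fun j _ => hintg i j)]
      exact Finset.sum_congr rfl fun i _ => integral_finset_sum _ (fun j _ => hintg i j)
    rw [← swap]
    set S : ℝ → ℂ := fun l =>
      ∑ i, ∑ j, (star x i * x j) * (Fm A B l i j - Fm A (A + B) l i j) with hS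
    have hSval : ∀ l ∈ Ioi (0:ℝ), 0 ≤ S l := by
      intro l hl
      have h := (hdiff l hl).dotProduct_mulVec_nonneg x
      rw [hq (Fm A B l - Fm A (A + B) l)] at h
      simpa only [Matrix.sub_apply] using h
    have hconv : ∫ l in Ioi (0:ℝ), S l = ∫ l in Ioi (0:ℝ), (((S l).re : ℝ) : ℂ) := by
      apply setIntegral_congr_fun measurableSet_Ioi
      intro l hl
      obtain ⟨hre, him⟩ := Complex.nonneg_iff.mp (hSval l hl)
      exact Complex.ext (by simp) (by simp [← him])
    have hOR : (∫ l in Ioi (0:ℝ), (((S l).re : ℝ) : ℂ))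
        = ((∫ l in Ioi (0:ℝ), (S l).re : ℝ) : ℂ) := integral_ofReal
    rw [hconv, hOR, Complex.zero_le_real]
    apply setIntegral_nonneg measurableSet_Ioi
    intro l hl
    exact (Complex.nonneg_iff.mp (hSval l hl)).1
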